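/- arXiv:0904.1997 — 4 statements merged into one kernel-verified Lean document; each statement's English description precedes it below -/
import Mathlib

section
/- Classical morphisms between classical structures form a category: the identity 𝟙_X is classical relative to any classical structure on X, and if f : X ⟶ Y and g : Y ⟶ Z are classical morphisms between classical structures then f ≫ g : X ⟶ Z is classical. -/
open CategoryTheory MonoidalCategory

universe v u

variable {C : Type u} [Category.{v} C] [MonoidalCategory C] [SymmetricCategory C]

/-- A dagger structure on a symmetric monoidal category: an involutive,
identity-on-objects, contravariant functor that coherently preserves the
symmetric monoidal structure. -/
structure Dagger (C : Type u) [Category.{v} C] [MonoidalCategory C]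
    [SymmetricCategory C] where
  dag : ∀ {A B : C}, (A ⟶ B) → (B ⟶ A)
  dag_comp : ∀ {A B E : C} (f : A ⟶ B) (g : B ⟶ E), dag (f ≫ g) = dag g ≫ dag f
  dag_id : ∀ A : C, dag (𝟙 A) = 𝟙 A
  dag_dag : ∀ {A B : C} (f : A ⟶ B), dag (dag f) = f
  dag_tensor : ∀ {A B A' B' : C} (f : A ⟶ B) (g : A' ⟶ B'),
    dag (f ⊗ₘ g) = dag f ⊗ₘ dag g
  dag_assoc : ∀ A B E : C, dag (α_ A B E).hom = (α_ A B E).inv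
  dag_lUnit : ∀ A : C, dag (λ_ A).hom = (λ_ A).inv
  dag_rUnit : ∀ A : C, dag (ρ_ A).hom = (ρ_ A).inv
  dag_braid : ∀ A B : C, dag (β_ A B).hom = (β_ A B).inv

/-- Positivity of an endomorphism: `e = g† ≫ g` for some `g : W ⟶ A`. -/
def Dagger.IsPositive (D : Dagger C) {A : C} (e : A ⟶ A) : Prop :=
  ∃ (W : C) (g : W ⟶ A), e = D.dag g ≫ g

/-- A classical structure: a commutative monoid object which, together with the
daggers of its multiplication and unit, is a special Frobenius algebra. -/
structure ClassicalStructure (D : Dagger C) (X : C) where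
  mul : X ⊗ X ⟶ X
  unit : 𝟙_ C ⟶ X
  mul_assoc' : (α_ X X X).hom ≫ (𝟙 X ⊗ₘ mul) ≫ mul = (mul ⊗ₘ 𝟙 X) ≫ mul
  one_mul' : (unit ⊗ₘ 𝟙 X) ≫ mul = (λ_ X).hom
  mul_one' : (𝟙 X ⊗ₘ unit) ≫ mul = (ρ_ X).hom
  mul_comm' : (β_ X X).hom ≫ mul = mul
  frobenius' : (𝟙 X ⊗ₘ D.dag mul) ≫ (α_ X X X).inv ≫ (mul ⊗ₘ 𝟙 X) = mul ≫ D.dag mul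
  special' : D.dag mul ≫ mul = 𝟙 X

namespace ClassicalStructure

variable {D : Dagger C}

/-- The comultiplication `Δ := ∇†`. -/
def comul {X : C} (S : ClassicalStructure D X) : X ⟶ X ⊗ X := D.dag S.mul

/-- The counit `⊤ := ⊥†`. -/
def counit {X : C} (S : ClassicalStructure D X) : X ⟶ 𝟙_ C := D.dag S.unit

/-- The induced Bell state `η := ⊥ ≫ Δ`. -/
def eta {X : C} (S : ClassicalStructure D X) : 𝟙_ C ⟶ X ⊗ X := S.unit ≫ S.comul

/-- The induced Bell costate `ε := ∇ ≫ ⊤`. -/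
def eps {X : C} (S : ClassicalStructure D X) : X ⊗ X ⟶ 𝟙_ C := S.mul ≫ S.counit

/-- The decoherence `Ξ := ∇ ≫ Δ`. -/
def Xi {X : C} (S : ClassicalStructure D X) : X ⊗ X ⟶ X ⊗ X := S.mul ≫ S.comul

end ClassicalStructure

/-- A morphism `f : X ⟶ Y` between classical structures is classical if
`(Δ_X ⊗ 𝟙_Y) ≫ (𝟙_X ⊗ f ⊗ 𝟙_Y) ≫ (𝟙_X ⊗ ∇_Y)` is positive. -/
def IsClassical {X Y : C} (D : Dagger C) (XS : ClassicalStructure D X)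
    (YS : ClassicalStructure D Y) (f : X ⟶ Y) : Prop :=
  D.IsPositive ((XS.comul ⊗ₘ 𝟙 Y) ≫ ((𝟙 X ⊗ₘ f) ⊗ₘ 𝟙 Y) ≫ (α_ X Y Y).hom ≫ (𝟙 X ⊗ₘ YS.mul))

/-- The conjugate `f_* := (η_Y ⊗ 𝟙_X) ≫ (𝟙_Y ⊗ f† ⊗ 𝟙_X) ≫ (𝟙_Y ⊗ ε_X)`. -/
def conjugate {X Y : C} (D : Dagger C) (XS : ClassicalStructure D X)
    (YS : ClassicalStructure D Y) (f : X ⟶ Y) : X ⟶ Y :=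
  (λ_ X).inv ≫ (YS.eta ⊗ₘ 𝟙 X) ≫ (α_ Y Y X).hom ≫ (𝟙 Y ⊗ₘ (D.dag f ⊗ₘ 𝟙 X)) ≫
    (𝟙 Y ⊗ₘ XS.eps) ≫ (ρ_ Y).hom

/-- The convolution `f ⋆ g := Δ_X ≫ (f_* ⊗ g) ≫ ∇_Y`. -/
def convol {X Y : C} (D : Dagger C) (XS : ClassicalStructure D X)
    (YS : ClassicalStructure D Y) (f g : X ⟶ Y) : X ⟶ Y :=
  XS.comul ≫ (conjugate D XS YS f ⊗ₘ g) ≫ YS.mul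

/-- A relation is a convolution-idempotent: `r = r ⋆ r`. -/
def IsRelation {X Y : C} (D : Dagger C) (XS : ClassicalStructure D X)
    (YS : ClassicalStructure D Y) (r : X ⟶ Y) : Prop :=
  r = convol D XS YS r r

/-- Single-valuedness: `r ≫ Δ_Y = Δ_X ≫ (r ⊗ r)`. -/
def SingleValued {X Y : C} (D : Dagger C) (XS : ClassicalStructure D X)
    (YS : ClassicalStructure D Y) (r : X ⟶ Y) : Prop :=
  r ≫ YS.comul = XS.comul ≫ (r ⊗ₘ r)

/-- Totality: `r ≫ ⊤_Y = ⊤_X`. -/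
def TotalRel {X Y : C} (D : Dagger C) (XS : ClassicalStructure D X)
    (YS : ClassicalStructure D Y) (r : X ⟶ Y) : Prop :=
  r ≫ YS.counit = XS.counit

/-- A function is a single-valued total relation. -/
def IsFunctionRel {X Y : C} (D : Dagger C) (XS : ClassicalStructure D X)
    (YS : ClassicalStructure D Y) (r : X ⟶ Y) : Prop :=
  IsRelation D XS YS r ∧ SingleValued D XS YS r ∧ TotalRel D XS YS r

/-- The middle-four interchange `(X ⊗ Y) ⊗ (Z ⊗ W) ⟶ (X ⊗ Z) ⊗ (Y ⊗ W)`
built from associators and the braiding. -/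
def midSwap (X Y Z W : C) : (X ⊗ Y) ⊗ (Z ⊗ W) ⟶ (X ⊗ Z) ⊗ (Y ⊗ W) :=
  (α_ X Y (Z ⊗ W)).hom ≫ (𝟙 X ⊗ₘ (α_ Y Z W).inv) ≫ (𝟙 X ⊗ₘ ((β_ Y Z).hom ⊗ₘ 𝟙 W)) ≫
    (𝟙 X ⊗ₘ (α_ Z Y W).hom) ≫ (α_ X Z (Y ⊗ W)).inv

/-- The multiplication `∇_{X⊗Y} := (𝟙_X ⊗ β_{Y,X} ⊗ 𝟙_Y) ≫ (∇_X ⊗ ∇_Y)` of the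
tensor of two classical structures. -/
def tensorMul {X Y : C} {D : Dagger C} (XS : ClassicalStructure D X)
    (YS : ClassicalStructure D Y) : (X ⊗ Y) ⊗ (X ⊗ Y) ⟶ X ⊗ Y :=
  midSwap X Y X Y ≫ (XS.mul ⊗ₘ YS.mul)

/-- The unit `⊥_{X⊗Y} := ⊥_X ⊗ ⊥_Y` of the tensor of two classical structures. -/
def tensorUnit'' {X Y : C} {D : Dagger C} (XS : ClassicalStructure D X)
    (YS : ClassicalStructure D Y) : 𝟙_ C ⟶ X ⊗ Y :=
  (λ_ (𝟙_ C)).inv ≫ (XS.unit ⊗ₘ YS.unit)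

/-- Complete positivity of `g : X ⊗ X ⟶ Y ⊗ Y` relative to the self-dual compact
structures induced by the classical structures:
`(𝟙_X ⊗ η_X ⊗ 𝟙_Y) ≫ (𝟙_X ⊗ g ⊗ 𝟙_Y) ≫ (𝟙_{X⊗Y} ⊗ ε_Y)` is positive. -/
def IsCP {X Y : C} (D : Dagger C) (XS : ClassicalStructure D X)
    (YS : ClassicalStructure D Y) (g : X ⊗ X ⟶ Y ⊗ Y) : Prop :=
  D.IsPositive ((𝟙 X ⊗ₘ (λ_ Y).inv) ≫ (𝟙 X ⊗ₘ (XS.eta ⊗ₘ 𝟙 Y)) ≫ (𝟙 X ⊗ₘ (g ⊗ₘ 𝟙 Y)) ≫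
    (𝟙 X ⊗ₘ (α_ Y Y Y).hom) ≫ (α_ X Y (Y ⊗ Y)).inv ≫ (𝟙 (X ⊗ Y) ⊗ₘ YS.eps) ≫
    (ρ_ (X ⊗ Y)).hom)

/-- A stochastic morphism: classical and total. -/
def Stochastic {X Y : C} (D : Dagger C) (XS : ClassicalStructure D X)
    (YS : ClassicalStructure D Y) (s : X ⟶ Y) : Prop :=
  IsClassical D XS YS s ∧ TotalRel D XS YS s

/-- A doubly stochastic morphism: both `s` and `s†` are stochastic. -/
def DoublyStochastic {X Y : C} (D : Dagger C) (XS : ClassicalStructure D X)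
    (YS : ClassicalStructure D Y) (s : X ⟶ Y) : Prop :=
  Stochastic D XS YS s ∧ Stochastic D YS XS (D.dag s)

section Aux

namespace Dagger
variable (D : Dagger C)

lemma dag_assoc_inv (A B E : C) : D.dag (α_ A B E).inv = (α_ A B E).hom := by
  conv_lhs => rw [← D.dag_assoc, D.dag_dag]

lemma dag_lUnit_inv (A : C) : D.dag (λ_ A).inv = (λ_ A).hom := by
  conv_lhs => rw [← D.dag_lUnit, D.dag_dag]

lemma dag_rUnit_inv (A : C) : D.dag (ρ_ A).inv = (ρ_ A).hom := by
  conv_lhs => rw [← D.dag_rUnit, D.dag_dag]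

lemma dag_whiskerLeft (X : C) {A B : C} (f : A ⟶ B) :
    D.dag (X ◁ f) = X ◁ D.dag f := by
  rw [← id_tensorHom, D.dag_tensor, D.dag_id, id_tensorHom]

lemma dag_whiskerRight {A B : C} (f : A ⟶ B) (X : C) :
    D.dag (f ▷ X) = D.dag f ▷ X := by
  rw [← tensorHom_id, D.dag_tensor, D.dag_id, tensorHom_id]

lemma dag_injective {A B : C} {f g : A ⟶ B} (h : D.dag f = D.dag g) : f = g := by
  rw [← D.dag_dag f, h, D.dag_dag]

end Dagger

namespace ClassicalStructure
variable {D : Dagger C} {Y : C} (S : ClassicalStructure D Y)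

lemma dag_comul : D.dag S.comul = S.mul := D.dag_dag _

lemma dag_eps : D.dag S.eps = S.eta := by
  rw [eps, eta, D.dag_comp, counit, D.dag_dag, comul]

lemma special_w : S.comul ≫ S.mul = 𝟙 Y := S.special'

lemma frob_w : (Y ◁ S.comul) ≫ (α_ Y Y Y).inv ≫ (S.mul ▷ Y) = S.mul ≫ S.comul := by
  have h := S.frobenius'
  simpa [comul, id_tensorHom, tensorHom_id] using h

lemma mul_assoc_w : (α_ Y Y Y).hom ≫ (Y ◁ S.mul) ≫ S.mul = (S.mul ▷ Y) ≫ S.mul := by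
  have h := S.mul_assoc'
  simpa [id_tensorHom, tensorHom_id] using h

lemma frob2_w : (S.comul ▷ Y) ≫ (α_ Y Y Y).hom ≫ (Y ◁ S.mul) = S.mul ≫ S.comul := by
  apply D.dag_injective
  simp only [D.dag_comp, D.dag_whiskerLeft, D.dag_whiskerRight, D.dag_assoc,
    S.dag_comul, Category.assoc]
  rw [show D.dag S.mul = S.comul from rfl]
  simpa using S.frob_w

lemma coassoc_w : S.comul ≫ (Y ◁ S.comul) ≫ (α_ Y Y Y).inv = S.comul ≫ (S.comul ▷ Y) := by
  apply D.dag_injective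
  simp only [D.dag_comp, D.dag_whiskerLeft, D.dag_whiskerRight, D.dag_assoc_inv,
    S.dag_comul, Category.assoc]
  simpa using S.mul_assoc_w

lemma coassoc_w' : S.comul ≫ (S.comul ▷ Y) ≫ (α_ Y Y Y).hom = S.comul ≫ (Y ◁ S.comul) := by
  calc S.comul ≫ (S.comul ▷ Y) ≫ (α_ Y Y Y).hom
      = (S.comul ≫ (Y ◁ S.comul) ≫ (α_ Y Y Y).inv) ≫ (α_ Y Y Y).hom := by
        rw [coassoc_w]; simp
    _ = S.comul ≫ (Y ◁ S.comul) := by simp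

lemma counit_left_w : S.comul ≫ (S.counit ▷ Y) = (λ_ Y).inv := by
  apply D.dag_injective
  rw [D.dag_comp, D.dag_whiskerRight, D.dag_lUnit_inv, S.dag_comul]
  rw [show D.dag S.counit = S.unit from D.dag_dag _]
  simpa [tensorHom_id] using S.one_mul'

lemma unit_right_w : (Y ◁ S.unit) ≫ S.mul = (ρ_ Y).hom := by
  rw [← id_tensorHom]; exact S.mul_one'

lemma snake : (ρ_ Y).inv ≫ (Y ◁ S.eta) ≫ (α_ Y Y Y).inv ≫ (S.eps ▷ Y) ≫ (λ_ Y).hom = 𝟙 Y := by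
  rw [eta, eps, MonoidalCategory.whiskerLeft_comp, comp_whiskerRight]
  slice_lhs 3 5 => rw [frob_w]
  slice_lhs 2 3 => rw [unit_right_w]
  slice_lhs 3 4 => rw [counit_left_w]
  simp

lemma assoc_eps : (S.mul ▷ Y) ≫ S.eps = (α_ Y Y Y).hom ≫ (Y ◁ S.mul) ≫ S.eps := by
  rw [eps]
  slice_rhs 1 3 => rw [mul_assoc_w]
  simp

lemma K_eq_id :
    (ρ_ Y).inv ≫ (Y ◁ S.eta) ≫ (Y ◁ (S.comul ▷ Y)) ≫ (Y ◁ (α_ Y Y Y).hom) ≫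
      (α_ Y Y (Y ⊗ Y)).inv ≫ (S.mul ▷ (Y ⊗ Y)) ≫ (α_ Y Y Y).inv ≫ (S.eps ▷ Y) ≫
      (λ_ Y).hom = 𝟙 Y := by
  slice_lhs 6 7 => rw [associator_inv_naturality_left]
  slice_lhs 7 8 => rw [← comp_whiskerRight, assoc_eps, comp_whiskerRight, comp_whiskerRight]
  have hc : (Y ◁ (α_ Y Y Y).hom) ≫ (α_ Y Y (Y ⊗ Y)).inv ≫ (α_ (Y ⊗ Y) Y Y).inv ≫
      ((α_ Y Y Y).hom ▷ Y) = (α_ Y (Y ⊗ Y) Y).inv := by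
    monoidal
  slice_lhs 4 7 => rw [hc]
  slice_lhs 4 5 => rw [← associator_inv_naturality_middle]
  slice_lhs 3 4 => rw [← MonoidalCategory.whiskerLeft_comp, ← comp_whiskerRight, special_w,
    id_whiskerRight, MonoidalCategory.whiskerLeft_id]
  simpa using S.snake

end ClassicalStructure
namespace ClassicalStructure
variable {D : Dagger C} {Y : C} (S : ClassicalStructure D Y)

lemma coassoc_eta : S.eta ≫ (Y ◁ S.comul) = S.eta ≫ (S.comul ▷ Y) ≫ (α_ Y Y Y).hom := by
  simp only [eta, Category.assoc]
  rw [← coassoc_w']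

lemma core_eq {Z : C} (g : Y ⟶ Z) (mZ : Z ⊗ Z ⟶ Z) :
    (Y ◁ ((λ_ Z).inv ≫ (S.eta ▷ Z) ≫ ((S.comul ▷ Y) ▷ Z) ≫ ((α_ Y Y Y).hom ▷ Z) ≫
        (α_ Y (Y ⊗ Y) Z).hom)) ≫
      (α_ Y Y ((Y ⊗ Y) ⊗ Z)).inv ≫ (S.mul ▷ ((Y ⊗ Y) ⊗ Z)) ≫
      (Y ◁ (((Y ◁ g) ▷ Z) ≫ (α_ Y Z Z).hom ≫ (Y ◁ mZ))) ≫
      (α_ Y Y Z).inv ≫ (S.eps ▷ Z) ≫ (λ_ Z).hom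
    = (g ▷ Z) ≫ mZ := by
  calc
    _ = ((Y ◁ ((λ_ Z).inv ≫ (S.eta ▷ Z) ≫ ((S.comul ▷ Y) ▷ Z) ≫ ((α_ Y Y Y).hom ▷ Z) ≫
            (α_ Y (Y ⊗ Y) Z).hom)) ≫
          (α_ Y Y ((Y ⊗ Y) ⊗ Z)).inv ≫ (S.mul ▷ ((Y ⊗ Y) ⊗ Z)) ≫
          (Y ◁ (α_ Y Y Z).hom) ≫ (α_ Y Y (Y ⊗ Z)).inv) ≫
          ((Y ⊗ Y) ◁ ((g ▷ Z) ≫ mZ)) ≫ (S.eps ▷ Z) ≫ (λ_ Z).hom := by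
      monoidal
    _ = ((Y ◁ ((λ_ Z).inv ≫ (S.eta ▷ Z) ≫ ((S.comul ▷ Y) ▷ Z) ≫ ((α_ Y Y Y).hom ▷ Z) ≫
            (α_ Y (Y ⊗ Y) Z).hom)) ≫
          (α_ Y Y ((Y ⊗ Y) ⊗ Z)).inv ≫ (S.mul ▷ ((Y ⊗ Y) ⊗ Z)) ≫
          (Y ◁ (α_ Y Y Z).hom) ≫ (α_ Y Y (Y ⊗ Z)).inv) ≫
          (S.eps ▷ (Y ⊗ Z)) ≫ (𝟙_ C ◁ ((g ▷ Z) ≫ mZ)) ≫ (λ_ Z).hom := by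
      rw [whisker_exchange_assoc]
    _ = (((ρ_ Y).inv ≫ (Y ◁ S.eta) ≫ (Y ◁ (S.comul ▷ Y)) ≫ (Y ◁ (α_ Y Y Y).hom) ≫
          (α_ Y Y (Y ⊗ Y)).inv ≫ (S.mul ▷ (Y ⊗ Y)) ≫ (α_ Y Y Y).inv ≫ (S.eps ▷ Y) ≫
          (λ_ Y).hom) ▷ Z) ≫ ((g ▷ Z) ≫ mZ) := by
      monoidal
    _ = (g ▷ Z) ≫ mZ := by
      rw [S.K_eq_id]
      simp

end ClassicalStructure

end Aux
namespace ClassicalStructure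
variable {D : Dagger C} {Y : C} (S : ClassicalStructure D Y)

lemma main_eq {X Z : C} (dX : X ⟶ X ⊗ X) (f : X ⟶ Y) (g : Y ⟶ Z) (mZ : Z ⊗ Z ⟶ Z) :
    (X ◁ ((λ_ Z).inv ≫ (S.eta ▷ Z) ≫ (α_ Y Y Z).hom)) ≫ (α_ X Y (Y ⊗ Z)).inv ≫
      (((dX ▷ Y) ≫ ((X ◁ f) ▷ Y) ≫ (α_ X Y Y).hom ≫ (X ◁ S.mul)) ⊗ₘ
        ((S.comul ▷ Z) ≫ ((Y ◁ g) ▷ Z) ≫ (α_ Y Z Z).hom ≫ (Y ◁ mZ))) ≫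
      (α_ X Y (Y ⊗ Z)).hom ≫ (X ◁ ((α_ Y Y Z).inv ≫ (S.eps ▷ Z) ≫ (λ_ Z).hom))
    = (dX ▷ Z) ≫ ((X ◁ (f ≫ g)) ▷ Z) ≫ (α_ X Z Z).hom ≫ (X ◁ mZ) := by
  calc
    _ = (X ◁ ((λ_ Z).inv ≫ ((S.eta ≫ (Y ◁ S.comul)) ▷ Z) ≫ (α_ Y (Y ⊗ Y) Z).hom)) ≫
          (X ◁ (Y ◁ (((Y ◁ g) ▷ Z) ≫ (α_ Y Z Z).hom ≫ (Y ◁ mZ)))) ≫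
          (α_ X Y (Y ⊗ Z)).inv ≫
          (((dX ▷ Y) ≫ ((X ◁ f) ▷ Y) ≫ (α_ X Y Y).hom ≫ (X ◁ S.mul)) ▷ (Y ⊗ Z)) ≫
          (α_ X Y (Y ⊗ Z)).hom ≫ (X ◁ ((α_ Y Y Z).inv ≫ (S.eps ▷ Z) ≫ (λ_ Z).hom)) := by
      rw [tensorHom_def']
      monoidal
    _ = (X ◁ ((λ_ Z).inv ≫ ((S.eta ≫ (S.comul ▷ Y) ≫ (α_ Y Y Y).hom) ▷ Z) ≫
            (α_ Y (Y ⊗ Y) Z).hom)) ≫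
          (X ◁ (Y ◁ (((Y ◁ g) ▷ Z) ≫ (α_ Y Z Z).hom ≫ (Y ◁ mZ)))) ≫
          (α_ X Y (Y ⊗ Z)).inv ≫
          (((dX ▷ Y) ≫ ((X ◁ f) ▷ Y) ≫ (α_ X Y Y).hom ≫ (X ◁ S.mul)) ▷ (Y ⊗ Z)) ≫
          (α_ X Y (Y ⊗ Z)).hom ≫ (X ◁ ((α_ Y Y Z).inv ≫ (S.eps ▷ Z) ≫ (λ_ Z).hom)) := by
      rw [S.coassoc_eta]
    _ = (X ◁ ((λ_ Z).inv ≫ (S.eta ▷ Z) ≫ ((S.comul ▷ Y) ▷ Z) ≫ ((α_ Y Y Y).hom ▷ Z) ≫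
            (α_ Y (Y ⊗ Y) Z).hom)) ≫
          (α_ X Y ((Y ⊗ Y) ⊗ Z)).inv ≫
          ((X ⊗ Y) ◁ (((Y ◁ g) ▷ Z) ≫ (α_ Y Z Z).hom ≫ (Y ◁ mZ))) ≫
          (((dX ▷ Y) ≫ ((X ◁ f) ▷ Y) ≫ (α_ X Y Y).hom ≫ (X ◁ S.mul)) ▷ (Y ⊗ Z)) ≫
          (α_ X Y (Y ⊗ Z)).hom ≫ (X ◁ ((α_ Y Y Z).inv ≫ (S.eps ▷ Z) ≫ (λ_ Z).hom)) := by
      monoidal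
    _ = (X ◁ ((λ_ Z).inv ≫ (S.eta ▷ Z) ≫ ((S.comul ▷ Y) ▷ Z) ≫ ((α_ Y Y Y).hom ▷ Z) ≫
            (α_ Y (Y ⊗ Y) Z).hom)) ≫
          (α_ X Y ((Y ⊗ Y) ⊗ Z)).inv ≫
          (((dX ▷ Y) ≫ ((X ◁ f) ▷ Y) ≫ (α_ X Y Y).hom ≫ (X ◁ S.mul)) ▷ ((Y ⊗ Y) ⊗ Z)) ≫
          ((X ⊗ Y) ◁ (((Y ◁ g) ▷ Z) ≫ (α_ Y Z Z).hom ≫ (Y ◁ mZ))) ≫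
          (α_ X Y (Y ⊗ Z)).hom ≫ (X ◁ ((α_ Y Y Z).inv ≫ (S.eps ▷ Z) ≫ (λ_ Z).hom)) := by
      rw [whisker_exchange_assoc]
    _ = (X ◁ ((λ_ Z).inv ≫ (S.eta ▷ Z) ≫ ((S.comul ▷ Y) ▷ Z) ≫ ((α_ Y Y Y).hom ▷ Z) ≫
            (α_ Y (Y ⊗ Y) Z).hom)) ≫
          (dX ▷ (Y ⊗ ((Y ⊗ Y) ⊗ Z))) ≫
          ((X ◁ f) ▷ (Y ⊗ ((Y ⊗ Y) ⊗ Z))) ≫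
          (α_ (X ⊗ Y) Y ((Y ⊗ Y) ⊗ Z)).inv ≫
          ((α_ X Y Y).hom ▷ ((Y ⊗ Y) ⊗ Z)) ≫ ((X ◁ S.mul) ▷ ((Y ⊗ Y) ⊗ Z)) ≫
          ((X ⊗ Y) ◁ (((Y ◁ g) ▷ Z) ≫ (α_ Y Z Z).hom ≫ (Y ◁ mZ))) ≫
          (α_ X Y (Y ⊗ Z)).hom ≫ (X ◁ ((α_ Y Y Z).inv ≫ (S.eps ▷ Z) ≫ (λ_ Z).hom)) := by
      monoidal
    _ = (dX ▷ Z) ≫ ((X ◁ f) ▷ Z) ≫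
          ((X ⊗ Y) ◁ ((λ_ Z).inv ≫ (S.eta ▷ Z) ≫ ((S.comul ▷ Y) ▷ Z) ≫
            ((α_ Y Y Y).hom ▷ Z) ≫ (α_ Y (Y ⊗ Y) Z).hom)) ≫
          (α_ (X ⊗ Y) Y ((Y ⊗ Y) ⊗ Z)).inv ≫
          ((α_ X Y Y).hom ▷ ((Y ⊗ Y) ⊗ Z)) ≫ ((X ◁ S.mul) ▷ ((Y ⊗ Y) ⊗ Z)) ≫
          ((X ⊗ Y) ◁ (((Y ◁ g) ▷ Z) ≫ (α_ Y Z Z).hom ≫ (Y ◁ mZ))) ≫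
          (α_ X Y (Y ⊗ Z)).hom ≫ (X ◁ ((α_ Y Y Z).inv ≫ (S.eps ▷ Z) ≫ (λ_ Z).hom)) := by
      rw [whisker_exchange_assoc, whisker_exchange_assoc]
    _ = (dX ▷ Z) ≫ ((X ◁ f) ▷ Z) ≫ (α_ X Y Z).hom ≫
          (X ◁ ((Y ◁ ((λ_ Z).inv ≫ (S.eta ▷ Z) ≫ ((S.comul ▷ Y) ▷ Z) ≫
              ((α_ Y Y Y).hom ▷ Z) ≫ (α_ Y (Y ⊗ Y) Z).hom)) ≫
            (α_ Y Y ((Y ⊗ Y) ⊗ Z)).inv ≫ (S.mul ▷ ((Y ⊗ Y) ⊗ Z)) ≫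
            (Y ◁ (((Y ◁ g) ▷ Z) ≫ (α_ Y Z Z).hom ≫ (Y ◁ mZ))) ≫
            (α_ Y Y Z).inv ≫ (S.eps ▷ Z) ≫ (λ_ Z).hom)) := by
      monoidal
    _ = (dX ▷ Z) ≫ ((X ◁ f) ▷ Z) ≫ (α_ X Y Z).hom ≫ (X ◁ ((g ▷ Z) ≫ mZ)) := by
      rw [S.core_eq g mZ]
    _ = (dX ▷ Z) ≫ ((X ◁ (f ≫ g)) ▷ Z) ≫ (α_ X Z Z).hom ≫ (X ◁ mZ) := by
      monoidal

end ClassicalStructure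

/-- classical morphisms form a category: identities are classical
and classical morphisms are closed under composition. -/
theorem classical_morphisms_form_category (D : Dagger C) :
    (∀ (X : C) (XS : ClassicalStructure D X), IsClassical D XS XS (𝟙 X)) ∧
    (∀ (X Y Z : C) (XS : ClassicalStructure D X) (YS : ClassicalStructure D Y)
        (ZS : ClassicalStructure D Z) (f : X ⟶ Y) (g : Y ⟶ Z),
      IsClassical D XS YS f → IsClassical D YS ZS g →
      IsClassical D XS ZS (f ≫ g)) := by
  constructor
  · intro X XS
    refine ⟨X, XS.comul, ?_⟩
    rw [XS.dag_comul]
    have h := XS.frob2_w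
    simp only [id_tensorHom, tensorHom_id] at h ⊢
    simpa using h
  · intro X Y Z XS YS ZS f g hf hg
    obtain ⟨W1, a, ha⟩ := hf
    obtain ⟨W2, b, hb⟩ := hg
    refine ⟨W1 ⊗ W2,
      (a ⊗ₘ b) ≫ (α_ X Y (Y ⊗ Z)).hom ≫
        (X ◁ ((α_ Y Y Z).inv ≫ (YS.eps ▷ Z) ≫ (λ_ Z).hom)), ?_⟩
    have hdag : D.dag ((a ⊗ₘ b) ≫ (α_ X Y (Y ⊗ Z)).hom ≫
        (X ◁ ((α_ Y Y Z).inv ≫ (YS.eps ▷ Z) ≫ (λ_ Z).hom)))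
        = (X ◁ ((λ_ Z).inv ≫ (YS.eta ▷ Z) ≫ (α_ Y Y Z).hom)) ≫
          (α_ X Y (Y ⊗ Z)).inv ≫ (D.dag a ⊗ₘ D.dag b) := by
      simp only [D.dag_comp, D.dag_whiskerLeft, D.dag_whiskerRight, D.dag_assoc,
        D.dag_assoc_inv, D.dag_lUnit, D.dag_tensor, YS.dag_eps, Category.assoc]
    rw [hdag]
    have hmerge : (D.dag a ⊗ₘ D.dag b) ≫ (a ⊗ₘ b) =
        ((XS.comul ⊗ₘ 𝟙 Y) ≫ ((𝟙 X ⊗ₘ f) ⊗ₘ 𝟙 Y) ≫ (α_ X Y Y).hom ≫ (𝟙 X ⊗ₘ YS.mul)) ⊗ₘ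
        ((YS.comul ⊗ₘ 𝟙 Z) ≫ ((𝟙 Y ⊗ₘ g) ⊗ₘ 𝟙 Z) ≫ (α_ Y Z Z).hom ≫ (𝟙 Y ⊗ₘ ZS.mul)) := by
      rw [tensorHom_comp_tensorHom, ← ha, ← hb]
    simp only [Category.assoc]
    rw [reassoc_of% hmerge]
    have key := YS.main_eq XS.comul f g ZS.mul
    simp only [id_tensorHom, tensorHom_id, Category.assoc] at key ⊢
    exact key.symm
end

section
/- Every classical morphism between classical structures is real: if f : X ⟶ Y is classical then f_* = f, where f_* is the conjugate of f. -/
open CategoryTheory MonoidalCategory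

universe v u

variable {C : Type u} [Category.{v} C] [MonoidalCategory C] [SymmetricCategory C]

section RealHelpers

variable {D : Dagger C}

lemma Dagger.IsPositive.dag_eq {A : C} {e : A ⟶ A} (h : D.IsPositive e) : D.dag e = e := by
  obtain ⟨W, g, rfl⟩ := h
  rw [D.dag_comp, D.dag_dag]

namespace ClassicalStructure

variable {X : C} (S : ClassicalStructure D X)

lemma braiding_self_inv (X : C) : (β_ X X).inv = (β_ X X).hom := by
  rw [← cancel_epi (β_ X X).hom, Iso.hom_inv_id, SymmetricCategory.symmetry]

lemma comul_counit : S.comul ≫ (S.counit ▷ X) = (λ_ X).inv := by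
  have h := congrArg D.dag S.one_mul'
  rw [D.dag_comp, D.dag_lUnit, D.dag_tensor, D.dag_id] at h
  simpa [comul, counit, tensorHom_id] using h

lemma mul_unit' : (X ◁ S.unit) ≫ S.mul = (ρ_ X).hom := by
  simpa [id_tensorHom] using S.mul_one'

lemma comul_braiding : S.comul ≫ (β_ X X).hom = S.comul := by
  have h := congrArg D.dag S.mul_comm'
  rw [D.dag_comp, D.dag_braid] at h
  conv_lhs => rw [comul, ← h]
  simp [comul]

lemma braiding_eps : (β_ X X).hom ≫ S.eps = S.eps := by
  rw [eps, ← Category.assoc, S.mul_comm']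

lemma eta_braiding : S.eta ≫ (β_ X X).hom = S.eta := by
  rw [eta, Category.assoc, S.comul_braiding]

end ClassicalStructure

lemma real_tail_swap {X Y : C} (h : X ⊗ Y ⟶ 𝟙_ C) :
    (α_ X Y Y).inv ≫ (h ▷ Y) ≫ (λ_ Y).hom =
    (X ◁ (β_ Y Y).hom) ≫ (α_ X Y Y).inv ≫ ((β_ X Y).hom ▷ Y) ≫ (α_ Y X Y).hom ≫
      (Y ◁ h) ≫ (ρ_ Y).hom := by
  have key := BraidedCategory.braiding_tensor_left_hom_assoc X Y Y (Y ◁ h ≫ (ρ_ Y).hom)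
  rw [← BraidedCategory.braiding_naturality_left_assoc h Y] at key
  rw [← cancel_epi (α_ X Y Y).hom, ← key, braiding_rightUnitor]
  simp

lemma real_extractL {X Y : C} (f : X ⟶ Y) (comul : X ⟶ X ⊗ X) (unit : 𝟙_ C ⟶ Y)
    (mul : Y ⊗ Y ⟶ Y) (counit : X ⟶ 𝟙_ C)
    (hmo : (Y ◁ unit) ≫ mul = (ρ_ Y).hom) (hcc : comul ≫ (counit ▷ X) = (λ_ X).inv) :
    (ρ_ X).inv ≫ (𝟙 X ⊗ₘ unit) ≫ ((comul ⊗ₘ 𝟙 Y) ≫ ((𝟙 X ⊗ₘ f) ⊗ₘ 𝟙 Y) ≫ (α_ X Y Y).hom ≫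
      (𝟙 X ⊗ₘ mul)) ≫ (counit ⊗ₘ 𝟙 Y) ≫ (λ_ Y).hom = f := by
  simp only [id_tensorHom, tensorHom_id, Category.assoc]
  rw [whisker_exchange_assoc comul unit, whisker_exchange_assoc (X ◁ f) unit,
    associator_naturality_right_assoc, ← MonoidalCategory.whiskerLeft_comp_assoc, hmo]
  rw [← rightUnitor_tensor_hom_assoc, rightUnitor_naturality_assoc, rightUnitor_naturality_assoc,
    Iso.inv_hom_id_assoc, whisker_exchange_assoc counit f]
  rw [MonoidalCategory.leftUnitor_naturality]
  slice_lhs 1 2 => rw [hcc]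
  simp

lemma real_extractR {X Y : C} (fd : Y ⟶ X) (eta : 𝟙_ C ⟶ Y ⊗ Y) (eps : X ⊗ X ⟶ 𝟙_ C)
    (unit : 𝟙_ C ⟶ Y) (comul : Y ⟶ Y ⊗ Y) (mul : X ⊗ X ⟶ X) (counit : X ⟶ 𝟙_ C)
    (hu : unit ≫ comul = eta) (hm : mul ≫ counit = eps)
    (heta : eta ≫ (β_ Y Y).hom = eta) (heps : (β_ X X).hom ≫ eps = eps) :
    (ρ_ X).inv ≫ (𝟙 X ⊗ₘ unit) ≫ ((𝟙 X ⊗ₘ comul) ≫ (α_ X Y Y).inv ≫ ((𝟙 X ⊗ₘ fd) ⊗ₘ 𝟙 Y) ≫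
      (mul ⊗ₘ 𝟙 Y)) ≫ (counit ⊗ₘ 𝟙 Y) ≫ (λ_ Y).hom
    = (λ_ X).inv ≫ (eta ⊗ₘ 𝟙 X) ≫ (α_ Y Y X).hom ≫ (𝟙 Y ⊗ₘ (fd ⊗ₘ 𝟙 X)) ≫ (𝟙 Y ⊗ₘ eps) ≫
      (ρ_ Y).hom := by
  simp only [id_tensorHom, tensorHom_id, Category.assoc]
  rw [← MonoidalCategory.whiskerLeft_comp_assoc, hu]
  rw [← comp_whiskerRight_assoc mul counit, hm]
  rw [← comp_whiskerRight_assoc (X ◁ fd) eps]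
  rw [← MonoidalCategory.whiskerLeft_comp_assoc Y (fd ▷ X) eps]
  conv_rhs => rw [← heps, BraidedCategory.braiding_naturality_left_assoc fd X,
    MonoidalCategory.whiskerLeft_comp Y (β_ Y X).hom (X ◁ fd ≫ eps)]
  have s1 : (λ_ X).inv ≫ eta ▷ X = (ρ_ X).inv ≫ X ◁ eta ≫ (β_ X (Y ⊗ Y)).hom := by
    rw [BraidedCategory.braiding_naturality_right]
    have h2 : (ρ_ X).inv ≫ (β_ X (𝟙_ C)).hom = (λ_ X).inv := by
      rw [← cancel_mono (λ_ X).hom]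
      simp [braiding_rightUnitor]
    rw [← Category.assoc, h2]
  conv_rhs => rw [← Category.assoc, s1]
  simp only [Category.assoc]
  rw [BraidedCategory.braiding_tensor_right_hom_assoc]
  simp only [Category.assoc, Iso.inv_hom_id_assoc]
  rw [← MonoidalCategory.whiskerLeft_comp_assoc Y (β_ X Y).hom, SymmetricCategory.symmetry,
    MonoidalCategory.whiskerLeft_id, Category.id_comp]
  conv_lhs => rw [← heta, MonoidalCategory.whiskerLeft_comp]
  simp only [Category.assoc]
  rw [real_tail_swap]
  rw [← MonoidalCategory.whiskerLeft_comp_assoc X (β_ Y Y).hom (β_ Y Y).hom,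
    SymmetricCategory.symmetry, MonoidalCategory.whiskerLeft_id, Category.id_comp]

end RealHelpers

/-- every classical morphism is real: `f_* = f`. -/
theorem classical_is_real {X Y : C} (D : Dagger C)
    (XS : ClassicalStructure D X) (YS : ClassicalStructure D Y)
    (f : X ⟶ Y) (hf : IsClassical D XS YS f) :
    conjugate D XS YS f = f := by
  have hdag : D.dag ((XS.comul ⊗ₘ 𝟙 Y) ≫ ((𝟙 X ⊗ₘ f) ⊗ₘ 𝟙 Y) ≫ (α_ X Y Y).hom ≫ (𝟙 X ⊗ₘ YS.mul))
      = (𝟙 X ⊗ₘ YS.comul) ≫ (α_ X Y Y).inv ≫ ((𝟙 X ⊗ₘ D.dag f) ⊗ₘ 𝟙 Y) ≫ (XS.mul ⊗ₘ 𝟙 Y) := by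
    simp only [D.dag_comp, D.dag_tensor, D.dag_id, D.dag_assoc, D.dag_dag,
      ClassicalStructure.comul, Category.assoc]
  have key : (𝟙 X ⊗ₘ YS.comul) ≫ (α_ X Y Y).inv ≫ ((𝟙 X ⊗ₘ D.dag f) ⊗ₘ 𝟙 Y) ≫ (XS.mul ⊗ₘ 𝟙 Y)
      = (XS.comul ⊗ₘ 𝟙 Y) ≫ ((𝟙 X ⊗ₘ f) ⊗ₘ 𝟙 Y) ≫ (α_ X Y Y).hom ≫ (𝟙 X ⊗ₘ YS.mul) :=
    hdag.symm.trans hf.dag_eq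
  have hR := real_extractR (D.dag f) YS.eta XS.eps YS.unit YS.comul XS.mul XS.counit
    rfl rfl YS.eta_braiding XS.braiding_eps
  rw [key] at hR
  rw [real_extractL f XS.comul YS.unit YS.mul XS.counit YS.mul_unit' XS.comul_counit] at hR
  rw [conjugate, ← hR]
end

section
/- For a classical structure (X, ∇, ⊥), the comultiplication Δ has right adjoint ∇ and the counit ⊤ has right adjoint ⊥ with respect to the convolution ordering; explicitly the following four equalities hold: (i) 𝟙_X = Δ_X ≫ (𝟙_X ⊗ (Δ ≫ ∇)) ≫ ∇_X; (ii) ∇ ≫ Δ = Δ_{X⊗X} ≫ ((∇ ≫ Δ) ⊗ 𝟙_{X⊗X}) ≫ ∇_{X⊗X}, where ∇_{X⊗X}, Δ_{X⊗X} belong to the tensor classical structure on X ⊗ X; (iii) 𝟙_X = Δ_X ≫ (𝟙_X ⊗ (⊤ ≫ ⊥)) ≫ ∇_X; (iv) ⊥ ≫ ⊤ = λ_I⁻¹ ≫ ((⊥ ≫ ⊤) ⊗ 𝟙_I) ≫ λ_I. -/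
open CategoryTheory MonoidalCategory

universe v u

variable {C : Type u} [Category.{v} C] [MonoidalCategory C] [SymmetricCategory C]

section AuxLemmas

variable {D : Dagger C} {X : C} (S : ClassicalStructure D X)

lemma Dagger.dag_assoc_inv_s10 (D : Dagger C) (A B E : C) :
    D.dag (α_ A B E).inv = (α_ A B E).hom := by
  rw [← D.dag_assoc, D.dag_dag]

lemma Dagger.dag_braid_self (D : Dagger C) (A : C) :
    D.dag (β_ A A).hom = (β_ A A).hom := by
  rw [D.dag_braid]
  rw [show (β_ A A).inv = (β_ A A).hom from ?_]
  rw [← Category.comp_id (β_ A A).inv, ← SymmetricCategory.symmetry A A,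
    ← Category.assoc, Iso.inv_hom_id, Category.id_comp]

lemma aux_dag_comul : D.dag S.comul = S.mul := by
  rw [ClassicalStructure.comul, D.dag_dag]

lemma aux_special : S.comul ≫ S.mul = 𝟙 X := S.special'

lemma aux_coassoc :
    S.comul ≫ (𝟙 X ⊗ₘ S.comul) ≫ (α_ X X X).inv = S.comul ≫ (S.comul ⊗ₘ 𝟙 X) := by
  have h := congrArg D.dag S.mul_assoc'
  simp only [D.dag_comp, D.dag_tensor, D.dag_id, D.dag_assoc, D.dag_assoc_inv_s10,
    D.dag_dag] at h
  simpa [ClassicalStructure.comul, Category.assoc] using h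

lemma aux_cocomm : S.comul ≫ (β_ X X).hom = S.comul := by
  have h := congrArg D.dag S.mul_comm'
  simp only [D.dag_comp, D.dag_braid_self] at h
  simpa [ClassicalStructure.comul] using h

lemma aux_frob2 :
    (S.comul ⊗ₘ 𝟙 X) ≫ (α_ X X X).hom ≫ (𝟙 X ⊗ₘ S.mul) = S.mul ≫ S.comul := by
  have h := congrArg D.dag S.frobenius'
  simp only [D.dag_comp, D.dag_tensor, D.dag_id, D.dag_assoc, D.dag_assoc_inv_s10,
    D.dag_dag] at h
  simpa [ClassicalStructure.comul, Category.assoc] using h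

lemma aux_counit_r : S.comul ≫ (𝟙 X ⊗ₘ S.counit) = (ρ_ X).inv := by
  have h := congrArg D.dag S.mul_one'
  simp only [D.dag_comp, D.dag_tensor, D.dag_id, D.dag_rUnit] at h
  simpa [ClassicalStructure.comul, ClassicalStructure.counit] using h

lemma midSwap_eq (X Y Z W : C) : midSwap X Y Z W = tensorμ X Y Z W := by
  simp [midSwap, tensorμ, id_tensorHom, tensorHom_id,
    MonoidalCategory.whiskerLeft_comp, Category.assoc]

lemma aux_dag_midSwap : D.dag (midSwap X X X X) = midSwap X X X X := by
  simp only [midSwap]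
  simp only [D.dag_comp, D.dag_tensor, D.dag_id, D.dag_assoc, D.dag_assoc_inv_s10,
    D.dag_braid_self]
  simp [Category.assoc]

lemma aux_dag_tensorMul :
    D.dag (tensorMul S S) = (S.comul ⊗ₘ S.comul) ≫ midSwap X X X X := by
  rw [tensorMul, D.dag_comp, D.dag_tensor, aux_dag_midSwap]
  rfl

open BraidedCategory in
lemma key_core {C : Type u} [Category.{v} C] [MonoidalCategory C] [SymmetricCategory C]
    {X : C} (m : X ⊗ X ⟶ X) (d : X ⟶ X ⊗ X)
    (hassoc : (α_ X X X).hom ≫ (X ◁ m) ≫ m = (m ▷ X) ≫ m)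
    (hco2 : d ≫ (d ▷ X) = d ≫ (X ◁ d) ≫ (α_ X X X).inv ≫ ((β_ X X).hom ▷ X))
    (hcocomm : d ≫ (β_ X X).hom = d)
    (hspecial : d ≫ m = 𝟙 X)
    (hfrob2 : (d ▷ X) ≫ (α_ X X X).hom ≫ (X ◁ m) = m ≫ d) :
    (d ⊗ₘ d) ≫ tensorμ X X X X ≫ ((m ≫ d) ⊗ₘ 𝟙 (X ⊗ X)) ≫ tensorμ X X X X ≫ (m ⊗ₘ m)
      = m ≫ d := by
  calc (d ⊗ₘ d) ≫ tensorμ X X X X ≫ ((m ≫ d) ⊗ₘ 𝟙 (X ⊗ X)) ≫ tensorμ X X X X ≫ (m ⊗ₘ m)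
      = (d ⊗ₘ d) ≫ tensorμ X X X X ≫
          (((d ▷ X) ≫ (α_ X X X).hom ≫ (X ◁ m)) ⊗ₘ 𝟙 (X ⊗ X)) ≫
          tensorμ X X X X ≫ (m ⊗ₘ m) := by rw [hfrob2]
    _ = d ▷ X ⊗≫ X ◁ (X ◁ d) ⊗≫ X ◁ ((β_ X X).hom ▷ X) ⊗≫ d ▷ (X ⊗ X ⊗ X) ⊗≫
        X ◁ (m ▷ (X ⊗ X)) ⊗≫ X ◁ ((β_ X X).hom ▷ X) ⊗≫ m ▷ (X ⊗ X) ⊗≫ X ◁ m := by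
      rw [tensorHom_def d d, tensorHom_def m m, tensorHom_id]
      dsimp only [tensorμ]
      monoidal
    _ = d ▷ X ⊗≫ X ◁ (X ◁ d) ⊗≫
        (X ◁ ((β_ X X).hom ▷ X) ≫ d ▷ ((X ⊗ X) ⊗ X)) ⊗≫
        X ◁ (m ▷ (X ⊗ X)) ⊗≫ X ◁ ((β_ X X).hom ▷ X) ⊗≫ m ▷ (X ⊗ X) ⊗≫ X ◁ m := by
      monoidal
    _ = d ▷ X ⊗≫
        (X ◁ (X ◁ d) ≫ d ▷ (X ⊗ (X ⊗ X))) ⊗≫ (X ⊗ X) ◁ ((β_ X X).hom ▷ X) ⊗≫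
        X ◁ (m ▷ (X ⊗ X)) ⊗≫ X ◁ ((β_ X X).hom ▷ X) ⊗≫ m ▷ (X ⊗ X) ⊗≫ X ◁ m := by
      rw [whisker_exchange]
      monoidal
    _ = ((d ≫ (d ▷ X)) ▷ X) ⊗≫ (X ⊗ X) ◁ (X ◁ d) ⊗≫ (X ⊗ X) ◁ ((β_ X X).hom ▷ X) ⊗≫
        X ◁ (m ▷ (X ⊗ X)) ⊗≫ X ◁ ((β_ X X).hom ▷ X) ⊗≫ m ▷ (X ⊗ X) ⊗≫ X ◁ m := by
      rw [whisker_exchange]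
      monoidal
    _ = d ▷ X ⊗≫ (X ◁ d) ▷ X ⊗≫ ((β_ X X).hom ▷ X) ▷ X ⊗≫
        (X ⊗ X) ◁ (X ◁ d) ⊗≫ (X ⊗ X) ◁ ((β_ X X).hom ▷ X) ⊗≫
        X ◁ (((m ▷ X) ≫ (β_ X X).hom) ▷ X) ⊗≫ m ▷ (X ⊗ X) ⊗≫ X ◁ m := by
      rw [hco2]
      monoidal
    _ = d ▷ X ⊗≫ (X ◁ d) ▷ X ⊗≫ ((β_ X X).hom ▷ X) ▷ X ⊗≫
        (X ⊗ X) ◁ (X ◁ d) ⊗≫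
        X ◁ (X ◁ (((β_ X X).hom ≫ (β_ X X).hom) ▷ X)) ⊗≫
        X ◁ (((β_ X X).hom ▷ X) ▷ X) ⊗≫ X ◁ ((X ◁ m) ▷ X) ⊗≫
        m ▷ (X ⊗ X) ⊗≫ X ◁ m := by
      rw [braiding_naturality_left, braiding_tensor_left_hom]
      monoidal
    _ = d ▷ X ⊗≫ (X ◁ d) ▷ X ⊗≫ ((β_ X X).hom ▷ X) ▷ X ⊗≫
        ((X ⊗ X ⊗ X) ◁ d ≫ (X ◁ (β_ X X).hom) ▷ (X ⊗ X)) ⊗≫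
        X ◁ ((X ◁ m) ▷ X) ⊗≫ m ▷ (X ⊗ X) ⊗≫ X ◁ m := by
      rw [SymmetricCategory.symmetry]
      monoidal
    _ = d ▷ X ⊗≫ (X ◁ d) ▷ X ⊗≫
        (((α_ X X X).inv ≫ ((β_ X X).hom ▷ X) ≫ (α_ X X X).hom ≫
          (X ◁ (β_ X X).hom) ≫ (α_ X X X).inv) ▷ X) ⊗≫
        (X ⊗ X ⊗ X) ◁ d ⊗≫
        X ◁ ((X ◁ m) ▷ X) ⊗≫ m ▷ (X ⊗ X) ⊗≫ X ◁ m := by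
      rw [whisker_exchange]
      monoidal
    _ = d ▷ X ⊗≫ ((X ◁ d ≫ (β_ X (X ⊗ X)).hom) ▷ X) ⊗≫
        (X ⊗ X ⊗ X) ◁ d ⊗≫
        X ◁ ((X ◁ m) ▷ X) ⊗≫ m ▷ (X ⊗ X) ⊗≫ X ◁ m := by
      rw [← braiding_tensor_right_hom]
      monoidal
    _ = ((d ≫ (β_ X X).hom) ▷ X) ⊗≫ ((d ▷ X) ▷ X) ⊗≫
        (X ⊗ X ⊗ X) ◁ d ⊗≫
        X ◁ ((X ◁ m) ▷ X) ⊗≫ m ▷ (X ⊗ X) ⊗≫ X ◁ m := by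
      rw [braiding_naturality_right]
      monoidal
    _ = d ▷ X ⊗≫
        (d ▷ (X ⊗ X) ≫ (X ⊗ X) ◁ (X ◁ d)) ⊗≫
        X ◁ ((X ◁ m) ▷ X) ⊗≫ m ▷ (X ⊗ X) ⊗≫ X ◁ m := by
      rw [hcocomm]
      monoidal
    _ = d ▷ X ⊗≫ X ◁ (X ◁ d) ⊗≫
        (d ▷ ((X ⊗ X) ⊗ X) ≫ (X ⊗ X) ◁ (m ▷ X)) ⊗≫
        m ▷ (X ⊗ X) ⊗≫ X ◁ m := by
      rw [← whisker_exchange]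
      monoidal
    _ = d ▷ X ⊗≫ X ◁ (X ◁ d) ⊗≫ X ◁ (m ▷ X) ⊗≫
        ((d ≫ m) ▷ (X ⊗ X)) ⊗≫ X ◁ m := by
      rw [← whisker_exchange]
      monoidal
    _ = d ▷ X ⊗≫ X ◁ (X ◁ d) ⊗≫ X ◁ ((m ▷ X) ≫ m) := by
      rw [hspecial]
      monoidal
    _ = d ▷ X ⊗≫ X ◁ (X ◁ (d ≫ m)) ⊗≫ X ◁ m := by
      rw [← hassoc]
      monoidal
    _ = (d ▷ X) ≫ (α_ X X X).hom ≫ (X ◁ m) := by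
      rw [hspecial]
      monoidal
    _ = m ≫ d := hfrob2

lemma key_frobenius_identity :
    S.mul ≫ S.comul =
      ((S.comul ⊗ₘ S.comul) ≫ midSwap X X X X) ≫ ((S.mul ≫ S.comul) ⊗ₘ 𝟙 (X ⊗ X)) ≫
        tensorMul S S := by
  have hassoc : (α_ X X X).hom ≫ (X ◁ S.mul) ≫ S.mul = (S.mul ▷ X) ≫ S.mul := by
    simpa [id_tensorHom, tensorHom_id] using S.mul_assoc'
  have h1 : S.comul ≫ (X ◁ S.comul) ≫ (α_ X X X).inv = S.comul ≫ (S.comul ▷ X) := by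
    simpa [id_tensorHom, tensorHom_id] using aux_coassoc S
  have hcocomm : S.comul ≫ (β_ X X).hom = S.comul := aux_cocomm S
  have hco2 : S.comul ≫ (S.comul ▷ X) =
      S.comul ≫ (X ◁ S.comul) ≫ (α_ X X X).inv ≫ ((β_ X X).hom ▷ X) := by
    symm
    calc S.comul ≫ (X ◁ S.comul) ≫ (α_ X X X).inv ≫ ((β_ X X).hom ▷ X)
        = (S.comul ≫ (X ◁ S.comul) ≫ (α_ X X X).inv) ≫ ((β_ X X).hom ▷ X) := by
          simp [Category.assoc]
      _ = (S.comul ≫ (S.comul ▷ X)) ≫ ((β_ X X).hom ▷ X) := by rw [h1]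
      _ = S.comul ≫ ((S.comul ≫ (β_ X X).hom) ▷ X) := by
          simp [comp_whiskerRight, Category.assoc]
      _ = S.comul ≫ (S.comul ▷ X) := by rw [hcocomm]
  have hspecial : S.comul ≫ S.mul = 𝟙 X := S.special'
  have hfrob2 : (S.comul ▷ X) ≫ (α_ X X X).hom ≫ (X ◁ S.mul) = S.mul ≫ S.comul := by
    simpa [id_tensorHom, tensorHom_id] using aux_frob2 S
  rw [tensorMul, midSwap_eq, Category.assoc]
  exact (key_core S.mul S.comul hassoc hco2 hcocomm hspecial hfrob2).symm

end AuxLemmas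

/-- `Δ ⊣ ∇` and `⊤ ⊣ ⊥` with respect to the convolution
ordering, expressed by the four explicit equalities. -/
theorem comonoid_right_adjoints {X : C} (D : Dagger C)
    (XS : ClassicalStructure D X) :
    (𝟙 X = XS.comul ≫ (𝟙 X ⊗ₘ (XS.comul ≫ XS.mul)) ≫ XS.mul) ∧
    (XS.mul ≫ XS.comul =
      D.dag (tensorMul XS XS) ≫ ((XS.mul ≫ XS.comul) ⊗ₘ 𝟙 (X ⊗ X)) ≫
        tensorMul XS XS) ∧
    (𝟙 X = XS.comul ≫ (𝟙 X ⊗ₘ (XS.counit ≫ XS.unit)) ≫ XS.mul) ∧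
    (XS.unit ≫ XS.counit =
      (λ_ (𝟙_ C)).inv ≫ ((XS.unit ≫ XS.counit) ⊗ₘ 𝟙 (𝟙_ C)) ≫ (λ_ (𝟙_ C)).hom) := by
  refine ⟨?_, ?_, ?_, ?_⟩
  · rw [aux_special, id_tensorHom_id, Category.id_comp, aux_special]
  · rw [aux_dag_tensorMul]
    exact key_frobenius_identity XS
  · have h1 : (𝟙 X ⊗ₘ (XS.counit ≫ XS.unit)) = (𝟙 X ⊗ₘ XS.counit) ≫ (𝟙 X ⊗ₘ XS.unit) := by
      rw [tensorHom_comp_tensorHom, Category.comp_id]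
    rw [h1]
    simp only [← Category.assoc]
    rw [aux_counit_r]
    simp only [Category.assoc]
    rw [XS.mul_one', Iso.inv_hom_id]
  · generalize XS.unit ≫ XS.counit = f
    have h2 : (f ⊗ₘ 𝟙 (𝟙_ C)) ≫ (λ_ (𝟙_ C)).hom = (λ_ (𝟙_ C)).hom ≫ f := by
      rw [tensorHom_id, unitors_equal, rightUnitor_naturality]
    rw [h2, Iso.inv_hom_id_assoc]
end

section
/- A morphism between Frobenius algebras which is simultaneously a monoid homomorphism and a comonoid homomorphism is an isomorphism: if (X, ∇_X, ⊥_X, Δ_X, ⊤_X) and (Y, ∇_Y, ⊥_Y, Δ_Y, ⊤_Y) are Frobenius algebras in a monoidal category and f : X ⟶ Y satisfies (f ⊗ f) ≫ ∇_Y = ∇_X ≫ f, ⊥_X ≫ f = ⊥_Y, f ≫ Δ_Y = Δ_X ≫ (f ⊗ f), and f ≫ ⊤_Y = ⊤_X, then f is invertible. -/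
open CategoryTheory MonoidalCategory

universe v u

/-- Auxiliary snake/zig-zag identity for a Frobenius algebra. -/
lemma frob_snake_aux {C : Type u} [Category.{v} C] [MonoidalCategory C] {X : C}
    (mul : X ⊗ X ⟶ X) (unit : 𝟙_ C ⟶ X) (comul : X ⟶ X ⊗ X) (counit : X ⟶ 𝟙_ C)
    (one_mul : (unit ⊗ₘ 𝟙 X) ≫ mul = (λ_ X).hom)
    (comul_counit : comul ≫ (𝟙 X ⊗ₘ counit) ≫ (ρ_ X).hom = 𝟙 X)
    (frob2 : (comul ⊗ₘ 𝟙 X) ≫ (α_ X X X).hom ≫ (𝟙 X ⊗ₘ mul) = mul ≫ comul) :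
    (λ_ X).inv ≫ ((unit ≫ comul) ⊗ₘ 𝟙 X) ≫ (α_ X X X).hom ≫
      (𝟙 X ⊗ₘ (mul ≫ counit)) ≫ (ρ_ X).hom = 𝟙 X := by
  have h : ((unit ≫ comul) ⊗ₘ 𝟙 X) ≫ (α_ X X X).hom ≫ (𝟙 X ⊗ₘ mul)
      = (λ_ X).hom ≫ comul := by
    rw [comp_tensor_id, Category.assoc, frob2, ← Category.assoc, one_mul]
  calc (λ_ X).inv ≫ ((unit ≫ comul) ⊗ₘ 𝟙 X) ≫ (α_ X X X).hom ≫
      (𝟙 X ⊗ₘ (mul ≫ counit)) ≫ (ρ_ X).hom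
      = (λ_ X).inv ≫ (((unit ≫ comul) ⊗ₘ 𝟙 X) ≫ (α_ X X X).hom ≫ (𝟙 X ⊗ₘ mul)) ≫
        (𝟙 X ⊗ₘ counit) ≫ (ρ_ X).hom := by
        simp [id_tensor_comp]
    _ = (λ_ X).inv ≫ ((λ_ X).hom ≫ comul) ≫ (𝟙 X ⊗ₘ counit) ≫ (ρ_ X).hom := by rw [h]
    _ = 𝟙 X := by
        simp only [Category.assoc, Iso.inv_hom_id_assoc]
        exact comul_counit

set_option maxHeartbeats 1000000 in
/-- a morphism between Frobenius algebras which is both a monoid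
homomorphism and a comonoid homomorphism is an isomorphism. -/
theorem frobenius_mon_comon_hom_is_iso {C : Type u} [Category.{v} C]
    [MonoidalCategory C] {X Y : C}
    (mulX : X ⊗ X ⟶ X) (unitX : 𝟙_ C ⟶ X)
    (comulX : X ⟶ X ⊗ X) (counitX : X ⟶ 𝟙_ C)
    (mulY : Y ⊗ Y ⟶ Y) (unitY : 𝟙_ C ⟶ Y)
    (comulY : Y ⟶ Y ⊗ Y) (counitY : Y ⟶ 𝟙_ C)
    (mul_assocX : (α_ X X X).hom ≫ (𝟙 X ⊗ₘ mulX) ≫ mulX = (mulX ⊗ₘ 𝟙 X) ≫ mulX)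
    (one_mulX : (unitX ⊗ₘ 𝟙 X) ≫ mulX = (λ_ X).hom)
    (mul_oneX : (𝟙 X ⊗ₘ unitX) ≫ mulX = (ρ_ X).hom)
    (coassocX : comulX ≫ (comulX ⊗ₘ 𝟙 X) ≫ (α_ X X X).hom = comulX ≫ (𝟙 X ⊗ₘ comulX))
    (counit_comulX : comulX ≫ (counitX ⊗ₘ 𝟙 X) ≫ (λ_ X).hom = 𝟙 X)
    (comul_counitX : comulX ≫ (𝟙 X ⊗ₘ counitX) ≫ (ρ_ X).hom = 𝟙 X)
    (frobX1 : (𝟙 X ⊗ₘ comulX) ≫ (α_ X X X).inv ≫ (mulX ⊗ₘ 𝟙 X) = mulX ≫ comulX)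
    (frobX2 : (comulX ⊗ₘ 𝟙 X) ≫ (α_ X X X).hom ≫ (𝟙 X ⊗ₘ mulX) = mulX ≫ comulX)
    (mul_assocY : (α_ Y Y Y).hom ≫ (𝟙 Y ⊗ₘ mulY) ≫ mulY = (mulY ⊗ₘ 𝟙 Y) ≫ mulY)
    (one_mulY : (unitY ⊗ₘ 𝟙 Y) ≫ mulY = (λ_ Y).hom)
    (mul_oneY : (𝟙 Y ⊗ₘ unitY) ≫ mulY = (ρ_ Y).hom)
    (coassocY : comulY ≫ (comulY ⊗ₘ 𝟙 Y) ≫ (α_ Y Y Y).hom = comulY ≫ (𝟙 Y ⊗ₘ comulY))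
    (counit_comulY : comulY ≫ (counitY ⊗ₘ 𝟙 Y) ≫ (λ_ Y).hom = 𝟙 Y)
    (comul_counitY : comulY ≫ (𝟙 Y ⊗ₘ counitY) ≫ (ρ_ Y).hom = 𝟙 Y)
    (frobY1 : (𝟙 Y ⊗ₘ comulY) ≫ (α_ Y Y Y).inv ≫ (mulY ⊗ₘ 𝟙 Y) = mulY ≫ comulY)
    (frobY2 : (comulY ⊗ₘ 𝟙 Y) ≫ (α_ Y Y Y).hom ≫ (𝟙 Y ⊗ₘ mulY) = mulY ≫ comulY)
    (f : X ⟶ Y)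
    (hmul : (f ⊗ₘ f) ≫ mulY = mulX ≫ f)
    (hunit : unitX ≫ f = unitY)
    (hcomul : f ≫ comulY = comulX ≫ (f ⊗ₘ f))
    (hcounit : f ≫ counitY = counitX) :
    IsIso f := by
  -- the cap of X and the cup of Y
  set ηX : 𝟙_ C ⟶ X ⊗ X := unitX ≫ comulX with hηX
  set εY : Y ⊗ Y ⟶ 𝟙_ C := mulY ≫ counitY with hεY
  set h : X ⊗ Y ⟶ 𝟙_ C := (f ⊗ₘ 𝟙 Y) ≫ εY with hh
  -- the candidate inverse
  set g : Y ⟶ X :=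
    (λ_ Y).inv ≫ (ηX ⊗ₘ 𝟙 Y) ≫ (α_ X X Y).hom ≫ (𝟙 X ⊗ₘ h) ≫ (ρ_ X).hom with hg
  -- transport of cup/cap along f
  have key1 : (f ⊗ₘ f) ≫ εY = mulX ≫ counitX := by
    rw [hεY, ← Category.assoc, hmul, Category.assoc, hcounit]
  have key2 : ηX ≫ (f ⊗ₘ f) = unitY ≫ comulY := by
    rw [hηX, Category.assoc, ← hcomul, ← Category.assoc, hunit]
  have hfg : f ≫ g = 𝟙 X := by
    calc f ≫ g
        = (λ_ X).inv ≫ ((𝟙 (𝟙_ C)) ⊗ₘ f) ≫ (ηX ⊗ₘ 𝟙 Y) ≫ (α_ X X Y).hom ≫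
          (𝟙 X ⊗ₘ h) ≫ (ρ_ X).hom := by
          rw [hg, ← Category.assoc, leftUnitor_inv_naturality]
          simp [id_tensorHom]
      _ = (λ_ X).inv ≫ (ηX ⊗ₘ f) ≫ (α_ X X Y).hom ≫ (𝟙 X ⊗ₘ h) ≫ (ρ_ X).hom := by
          rw [← Category.assoc ((𝟙 (𝟙_ C)) ⊗ₘ f), tensorHom_comp_tensorHom, Category.id_comp,
            Category.comp_id]
      _ = (λ_ X).inv ≫ ((ηX ⊗ₘ 𝟙 X) ≫ ((𝟙 X ⊗ₘ 𝟙 X) ⊗ₘ f)) ≫ (α_ X X Y).hom ≫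
          (𝟙 X ⊗ₘ h) ≫ (ρ_ X).hom := by
          simp only [tensorHom_comp_tensorHom, id_tensorHom_id, Category.comp_id, Category.id_comp]
      _ = (λ_ X).inv ≫ (ηX ⊗ₘ 𝟙 X) ≫ (α_ X X X).hom ≫ (𝟙 X ⊗ₘ (𝟙 X ⊗ₘ f)) ≫
          (𝟙 X ⊗ₘ h) ≫ (ρ_ X).hom := by
          simp only [Category.assoc]
          rw [associator_naturality_assoc]
      _ = (λ_ X).inv ≫ (ηX ⊗ₘ 𝟙 X) ≫ (α_ X X X).hom ≫
          (𝟙 X ⊗ₘ ((𝟙 X ⊗ₘ f) ≫ h)) ≫ (ρ_ X).hom := by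
          simp only [hh, id_tensor_comp, Category.assoc]
      _ = (λ_ X).inv ≫ (ηX ⊗ₘ 𝟙 X) ≫ (α_ X X X).hom ≫
          (𝟙 X ⊗ₘ (mulX ≫ counitX)) ≫ (ρ_ X).hom := by
          congr 3
          rw [hh, ← Category.assoc, tensorHom_comp_tensorHom, Category.id_comp,
            Category.comp_id, key1]
      _ = 𝟙 X := frob_snake_aux mulX unitX comulX counitX one_mulX comul_counitX frobX2
  have hgf : g ≫ f = 𝟙 Y := by
    have e : ηX ≫ (f ⊗ₘ 𝟙 X) ≫ (𝟙 Y ⊗ₘ f) = unitY ≫ comulY := by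
      rw [← key2, tensorHom_comp_tensorHom]; simp
    calc g ≫ f
        = (λ_ Y).inv ≫ (ηX ⊗ₘ 𝟙 Y) ≫ (α_ X X Y).hom ≫ (𝟙 X ⊗ₘ h) ≫
          (f ⊗ₘ 𝟙 (𝟙_ C)) ≫ (ρ_ Y).hom := by
          rw [hg]
          simp only [Category.assoc]
          rw [← rightUnitor_naturality]
          simp [tensorHom_id]
      _ = (λ_ Y).inv ≫ (ηX ⊗ₘ 𝟙 Y) ≫ (α_ X X Y).hom ≫
          ((f ⊗ₘ 𝟙 (X ⊗ Y)) ≫ (𝟙 Y ⊗ₘ h)) ≫ (ρ_ Y).hom := by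
          simp only [hh, Category.assoc]
          simp only [tensorHom_comp_tensorHom_assoc, tensorHom_comp_tensorHom, Category.id_comp,
            Category.comp_id, Category.assoc]
      _ = (λ_ Y).inv ≫ (ηX ⊗ₘ 𝟙 Y) ≫ (((f ⊗ₘ 𝟙 X) ⊗ₘ 𝟙 Y) ≫ (α_ Y X Y).hom) ≫
          (𝟙 Y ⊗ₘ h) ≫ (ρ_ Y).hom := by
          simp only [Category.assoc, associator_naturality_assoc, id_tensorHom_id]
      _ = (λ_ Y).inv ≫ ((ηX ≫ (f ⊗ₘ 𝟙 X)) ⊗ₘ 𝟙 Y) ≫ (α_ Y X Y).hom ≫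
          (𝟙 Y ⊗ₘ (f ⊗ₘ 𝟙 Y)) ≫ (𝟙 Y ⊗ₘ εY) ≫ (ρ_ Y).hom := by
          simp only [hh, Category.assoc]
          simp only [tensorHom_comp_tensorHom_assoc, tensorHom_comp_tensorHom, Category.id_comp,
            Category.comp_id, Category.assoc]
      _ = (λ_ Y).inv ≫ ((ηX ≫ (f ⊗ₘ 𝟙 X)) ⊗ₘ 𝟙 Y) ≫
          (((𝟙 Y ⊗ₘ f) ⊗ₘ 𝟙 Y) ≫ (α_ Y Y Y).hom) ≫ (𝟙 Y ⊗ₘ εY) ≫ (ρ_ Y).hom := by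
          simp only [Category.assoc, associator_naturality_assoc]
      _ = (λ_ Y).inv ≫ ((ηX ≫ (f ⊗ₘ 𝟙 X) ≫ (𝟙 Y ⊗ₘ f)) ⊗ₘ 𝟙 Y) ≫
          (α_ Y Y Y).hom ≫ (𝟙 Y ⊗ₘ εY) ≫ (ρ_ Y).hom := by
          simp only [hh, Category.assoc]
          simp only [tensorHom_comp_tensorHom_assoc, tensorHom_comp_tensorHom, Category.id_comp,
            Category.comp_id, Category.assoc]
      _ = (λ_ Y).inv ≫ ((unitY ≫ comulY) ⊗ₘ 𝟙 Y) ≫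
          (α_ Y Y Y).hom ≫ (𝟙 Y ⊗ₘ (mulY ≫ counitY)) ≫ (ρ_ Y).hom := by
          rw [e, hεY]
      _ = 𝟙 Y := frob_snake_aux mulY unitY comulY counitY one_mulY comul_counitY frobY2
  exact ⟨g, hfg, hgf⟩
end
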